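/- In the GLM risk setup with Σ = E[xxᵀ] positive definite and θ* ≠ 0: for every D with 0 < D < ‖θ*‖₂ and every θ ∈ ℝ^p with ‖θ‖₂ ≤ D, the risk gradient satisfies ‖∇R(θ)‖₂ ≥ (Φ''(L_x‖θ*‖₂)·λ_min(Σ)/2)·(‖θ*‖₂ − D) > 0. -/

import Mathlib

open MeasureTheory
open scoped RealInnerProductSpace

section Aux

/-- MVT-based strong-convexity-type pointwise bound. -/
lemma key_mvt {Φ : ℝ → ℝ} (hΦ : ContDiff ℝ 2 Φ)
    (hΦ''even : ∀ t : ℝ, deriv (deriv Φ) (-t) = deriv (deriv Φ) t)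
    (hΦ''anti : AntitoneOn (deriv (deriv Φ)) (Set.Ici (0:ℝ)))
    {M : ℝ} (hM : 0 ≤ M) :
    ∀ a b : ℝ, |a| ≤ M → |b| ≤ M →
      deriv (deriv Φ) M * (a - b) ^ 2 ≤ (deriv Φ a - deriv Φ b) * (a - b) := by
  have h2 : ContDiff ℝ (1 + 1) Φ := by exact_mod_cast hΦ
  have hΦ'cd : ContDiff ℝ 1 (deriv Φ) := ((contDiff_succ_iff_deriv.mp h2).2).2
  have hΦ'diff : Differentiable ℝ (deriv Φ) := hΦ'cd.differentiable one_ne_zero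
  -- evenness gives value at |t|
  have evenabs : ∀ t : ℝ, deriv (deriv Φ) t = deriv (deriv Φ) |t| := by
    intro t
    rcases abs_cases t with ⟨h, _⟩ | ⟨h, _⟩
    · rw [h]
    · rw [h, hΦ''even t]
  have lb : ∀ ξ : ℝ, |ξ| ≤ M → deriv (deriv Φ) M ≤ deriv (deriv Φ) ξ := by
    intro ξ hξ
    calc deriv (deriv Φ) M ≤ deriv (deriv Φ) |ξ| :=
          hΦ''anti (Set.mem_Ici.mpr (abs_nonneg ξ)) (Set.mem_Ici.mpr hM) hξ
      _ = deriv (deriv Φ) ξ := (evenabs ξ).symm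
  -- main claim, asymmetric version
  have key1 : ∀ a b : ℝ, b < a → |a| ≤ M → |b| ≤ M →
      deriv (deriv Φ) M * (a - b) ^ 2 ≤ (deriv Φ a - deriv Φ b) * (a - b) := by
    intro a b hba ha hb
    obtain ⟨ξ, hξmem, hξ⟩ := exists_deriv_eq_slope (deriv Φ) hba
      (hΦ'cd.continuous.continuousOn) (hΦ'diff.differentiableOn)
    have hξabs : |ξ| ≤ M := by
      have h1 : -M ≤ b := (abs_le.mp hb).1
      have h2 : a ≤ M := (abs_le.mp ha).2
      have := hξmem.1
      have := hξmem.2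
      rw [abs_le]; constructor <;> linarith
    have hslope : deriv Φ a - deriv Φ b = deriv (deriv Φ) ξ * (a - b) := by
      have hne : a - b ≠ 0 := by linarith [hba]
      field_simp at hξ
      linarith [hξ]
    have hlb := lb ξ hξabs
    have hab : (0:ℝ) < a - b := by linarith
    nlinarith [sq_nonneg (a - b)]
  intro a b ha hb
  rcases lt_trichotomy b a with h | h | h
  · exact key1 a b h ha hb
  · simp [h]
  · have := key1 b a h hb ha
    nlinarith [this]

end Aux

set_option maxHeartbeats 1000000 in
set_option synthInstance.maxHeartbeats 1000000 in
/-- Lower bound on the norm of the GLM risk gradient over an `ℓ₂`-ball of radius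
`D < ‖θ*‖₂` (used in the proof of Theorem `ERM_GLM_UP_General`). Here `lamMin` plays
the role of `λ_min(Σ)`, characterized through the quadratic form `v ↦ E[⟨x, v⟩²]`;
positive definiteness of `Σ` is `0 < lamMin`. -/
theorem stmt_2 {p : ℕ} {Ω : Type*} [MeasurableSpace Ω]
    (μ : Measure Ω) [IsProbabilityMeasure μ]
    (x : Ω → EuclideanSpace ℝ (Fin p)) (hxmeas : Measurable x)
    (Lx : ℝ) (hxbd : ∀ᵐ ω ∂μ, ‖x ω‖ ≤ Lx)
    (hEx : ∫ ω, x ω ∂μ = 0)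
    (Φ : ℝ → ℝ) (hΦ : ContDiff ℝ 2 Φ)
    (KΦ' KΦ'' : ℝ)
    (hΦ' : ∀ t : ℝ, |deriv Φ t| ≤ KΦ')
    (hΦ''pos : ∀ t : ℝ, 0 < deriv (deriv Φ) t)
    (hΦ''bd : ∀ t : ℝ, deriv (deriv Φ) t ≤ KΦ'')
    (hΦ''even : ∀ t : ℝ, deriv (deriv Φ) (-t) = deriv (deriv Φ) t)
    (hΦ''anti : AntitoneOn (deriv (deriv Φ)) (Set.Ici (0:ℝ)))
    (θstar : EuclideanSpace ℝ (Fin p)) (hθstar : θstar ≠ 0)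
    (R : EuclideanSpace ℝ (Fin p) → ℝ)
    (hR : ∀ θ, R θ = ∫ ω, (Φ ⟪x ω, θ⟫ - deriv Φ ⟪x ω, θstar⟫ * ⟪x ω, θ⟫) ∂μ)
    (lamMin : ℝ) (hlamMinPos : 0 < lamMin)
    (hlamMin : ∀ v : EuclideanSpace ℝ (Fin p), lamMin * ‖v‖ ^ 2 ≤ ∫ ω, ⟪x ω, v⟫ ^ 2 ∂μ) :
    ∀ D : ℝ, 0 < D → D < ‖θstar‖ →
      (∀ θ : EuclideanSpace ℝ (Fin p), ‖θ‖ ≤ D →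
        deriv (deriv Φ) (Lx * ‖θstar‖) * lamMin / 2 * (‖θstar‖ - D) ≤ ‖gradient R θ‖) ∧
      0 < deriv (deriv Φ) (Lx * ‖θstar‖) * lamMin / 2 * (‖θstar‖ - D) := by
  intro D hD hDlt
  have hKΦ'0 : 0 ≤ KΦ' := (abs_nonneg _).trans (hΦ' 0)
  have hLx0 : 0 ≤ Lx := by
    obtain ⟨ω, hω⟩ := hxbd.exists
    exact (norm_nonneg _).trans hω
  set M := Lx * ‖θstar‖ with hMdef
  have hM0 : 0 ≤ M := mul_nonneg hLx0 (norm_nonneg _)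
  have hcpos : 0 < deriv (deriv Φ) M * lamMin / 2 * (‖θstar‖ - D) :=
    mul_pos (div_pos (mul_pos (hΦ''pos M) hlamMinPos) two_pos) (sub_pos.mpr hDlt)
  refine ⟨?_, hcpos⟩
  intro θ hθD
  -- differentiability facts
  have h2 : ContDiff ℝ (1 + 1) Φ := by exact_mod_cast hΦ
  have hΦdiff : Differentiable ℝ Φ := (contDiff_succ_iff_deriv.mp h2).1
  have hΦ'cd : ContDiff ℝ 1 (deriv Φ) := ((contDiff_succ_iff_deriv.mp h2).2).2
  have hΦ'cont : Continuous (deriv Φ) := hΦ'cd.continuous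
  -- measurability of inner products
  have hinner : ∀ v : EuclideanSpace ℝ (Fin p),
      Measurable (fun ω => (⟪x ω, v⟫ : ℝ)) := fun v => hxmeas.inner measurable_const
  -- simple integrability helper
  have bddInt : ∀ (f : Ω → ℝ) (C : ℝ), AEStronglyMeasurable f μ →
      (∀ᵐ ω ∂μ, |f ω| ≤ C) → Integrable f μ := by
    intro f C hm hb
    exact (integrable_const C).mono' hm (by simpa [Real.norm_eq_abs] using hb)
  -- the pointwise derivative
  set F : EuclideanSpace ℝ (Fin p) → Ω → ℝ :=
    fun y ω => Φ ⟪x ω, y⟫ - deriv Φ ⟪x ω, θstar⟫ * ⟪x ω, y⟫ with hFdef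
  set F' : EuclideanSpace ℝ (Fin p) → Ω → (EuclideanSpace ℝ (Fin p)) →L[ℝ] ℝ :=
    fun y ω => (deriv Φ ⟪x ω, y⟫ - deriv Φ ⟪x ω, θstar⟫) • (innerSL ℝ (x ω)) with hF'def
  have hdiffF : ∀ ω, ∀ y : EuclideanSpace ℝ (Fin p), HasFDerivAt (F · ω) (F' y ω) y := by
    intro ω y
    have h1 : HasFDerivAt (fun y : EuclideanSpace ℝ (Fin p) => (⟪x ω, y⟫ : ℝ))
        (innerSL ℝ (x ω)) y := (innerSL ℝ (x ω)).hasFDerivAt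
    have h2 : HasFDerivAt (fun y : EuclideanSpace ℝ (Fin p) => Φ ⟪x ω, y⟫)
        (deriv Φ ⟪x ω, y⟫ • innerSL ℝ (x ω)) y :=
      (hΦdiff _).hasDerivAt.comp_hasFDerivAt y h1
    have h3 : HasFDerivAt
        (fun y : EuclideanSpace ℝ (Fin p) => deriv Φ ⟪x ω, θstar⟫ * ⟪x ω, y⟫)
        (deriv Φ ⟪x ω, θstar⟫ • innerSL ℝ (x ω)) y := h1.const_mul _
    have := h2.sub h3
    simp only [hF'def, sub_smul]; exact this
  -- strong measurability of F and F'
  have hFmeas : ∀ y : EuclideanSpace ℝ (Fin p), AEStronglyMeasurable (F y) μ := by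
    intro y
    exact (((hΦ.continuous.measurable.comp (hinner y)).sub
      (((hΦ'cont.measurable.comp (hinner θstar))).mul (hinner y)))).aestronglyMeasurable
  have hF'meas : ∀ y : EuclideanSpace ℝ (Fin p), AEStronglyMeasurable (F' y) μ := by
    intro y
    have hc : StronglyMeasurable fun ω => deriv Φ ⟪x ω, y⟫ - deriv Φ ⟪x ω, θstar⟫ :=
      ((hΦ'cont.measurable.comp (hinner y)).sub
        (hΦ'cont.measurable.comp (hinner θstar))).stronglyMeasurable
    have hsl : StronglyMeasurable fun ω => innerSL ℝ (x ω) :=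
      (innerSL ℝ (E := EuclideanSpace ℝ (Fin p))).continuous.comp_stronglyMeasurable
        hxmeas.stronglyMeasurable
    exact (hc.smul hsl).aestronglyMeasurable
  -- bound on F'
  have hF'bd : ∀ᵐ ω ∂μ, ∀ y ∈ Metric.ball θ 1, ‖F' y ω‖ ≤ 2 * KΦ' * Lx := by
    filter_upwards [hxbd] with ω hω
    intro y _
    have h1 : |deriv Φ ⟪x ω, y⟫ - deriv Φ ⟪x ω, θstar⟫| ≤ 2 * KΦ' := by
      calc |deriv Φ ⟪x ω, y⟫ - deriv Φ ⟪x ω, θstar⟫|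
          ≤ |deriv Φ ⟪x ω, y⟫| + |deriv Φ ⟪x ω, θstar⟫| := abs_sub _ _
        _ ≤ KΦ' + KΦ' := add_le_add (hΦ' _) (hΦ' _)
        _ = 2 * KΦ' := by ring
    apply ContinuousLinearMap.opNorm_le_bound _ (by positivity)
    intro u
    have happ : F' y ω u = (deriv Φ ⟪x ω, y⟫ - deriv Φ ⟪x ω, θstar⟫) * ⟪x ω, u⟫ := by
      simp only [hF'def]; simp [smul_eq_mul]
    rw [happ, Real.norm_eq_abs, abs_mul]
    have h2 : |(⟪x ω, u⟫ : ℝ)| ≤ Lx * ‖u‖ := by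
      calc |(⟪x ω, u⟫ : ℝ)| ≤ ‖x ω‖ * ‖u‖ := abs_real_inner_le_norm _ _
        _ ≤ Lx * ‖u‖ := mul_le_mul_of_nonneg_right hω (norm_nonneg _)
    calc |deriv Φ ⟪x ω, y⟫ - deriv Φ ⟪x ω, θstar⟫| * |(⟪x ω, u⟫ : ℝ)|
        ≤ (2 * KΦ') * (Lx * ‖u‖) :=
          mul_le_mul h1 h2 (abs_nonneg _) (by positivity)
      _ = 2 * KΦ' * Lx * ‖u‖ := by ring
  -- integrability of F θ
  have hΦlip : ∀ t : ℝ, |Φ t - Φ 0| ≤ KΦ' * |t| := by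
    intro t
    have hlip := lipschitzWith_of_nnnorm_deriv_le (C := KΦ'.toNNReal) hΦdiff
      (fun s => by
        rw [← NNReal.coe_le_coe, coe_nnnorm, Real.norm_eq_abs, Real.coe_toNNReal _ hKΦ'0]
        exact hΦ' s)
    have := hlip.dist_le_mul t 0
    simpa [Real.dist_eq, Real.coe_toNNReal _ hKΦ'0] using this
  have hFint : Integrable (F θ) μ := by
    apply bddInt _ (|Φ 0| + KΦ' * (Lx * D) + KΦ' * (Lx * D)) (hFmeas θ)
    filter_upwards [hxbd] with ω hω
    have hip : |(⟪x ω, θ⟫ : ℝ)| ≤ Lx * D := by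
      calc |(⟪x ω, θ⟫ : ℝ)| ≤ ‖x ω‖ * ‖θ‖ := abs_real_inner_le_norm _ _
        _ ≤ Lx * D := mul_le_mul hω hθD (norm_nonneg _) hLx0
    have h1 : |Φ ⟪x ω, θ⟫| ≤ |Φ 0| + KΦ' * (Lx * D) := by
      have := hΦlip ⟪x ω, θ⟫
      have h2 : KΦ' * |(⟪x ω, θ⟫ : ℝ)| ≤ KΦ' * (Lx * D) :=
        mul_le_mul_of_nonneg_left hip hKΦ'0
      calc |Φ ⟪x ω, θ⟫| ≤ |Φ 0| + |Φ ⟪x ω, θ⟫ - Φ 0| := by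
            have := abs_sub_abs_le_abs_sub (Φ ⟪x ω, θ⟫) (Φ 0); linarith [abs_nonneg (Φ ⟪x ω, θ⟫ - Φ 0)]
        _ ≤ |Φ 0| + KΦ' * (Lx * D) := by linarith
    have h3 : |deriv Φ ⟪x ω, θstar⟫ * ⟪x ω, θ⟫| ≤ KΦ' * (Lx * D) := by
      rw [abs_mul]
      exact mul_le_mul (hΦ' _) hip (abs_nonneg _) hKΦ'0
    calc |F θ ω| ≤ |Φ ⟪x ω, θ⟫| + |deriv Φ ⟪x ω, θstar⟫ * ⟪x ω, θ⟫| := abs_sub _ _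
      _ ≤ |Φ 0| + KΦ' * (Lx * D) + KΦ' * (Lx * D) := by linarith
  -- differentiation under the integral sign
  have hmain : HasFDerivAt (fun y => ∫ ω, F y ω ∂μ) (∫ ω, F' θ ω ∂μ) θ := by
    apply hasFDerivAt_integral_of_dominated_of_fderiv_le
      (F' := F') (bound := fun _ => 2 * KΦ' * Lx) (Metric.ball_mem_nhds θ one_pos)
    · exact Filter.Eventually.of_forall hFmeas
    · exact hFint
    · exact hF'meas θ
    · exact hF'bd
    · exact integrable_const _
    · filter_upwards with ω
      intro y _
      exact hdiffF ω y
  have hReq : R = fun y => ∫ ω, F y ω ∂μ := funext hR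
  have hRfder : HasFDerivAt R (∫ ω, F' θ ω ∂μ) θ := by rw [hReq]; exact hmain
  -- integrability of F' θ
  have hF'int : Integrable (F' θ) μ := by
    apply (integrable_const (2 * KΦ' * Lx)).mono' (hF'meas θ)
    filter_upwards [hF'bd] with ω hω
    exact hω θ (Metric.mem_ball_self one_pos)
  -- gradient inner product formula
  have hgrad_inner : ∀ v : EuclideanSpace ℝ (Fin p),
      ⟪gradient R θ, v⟫ =
        ∫ ω, (deriv Φ ⟪x ω, θ⟫ - deriv Φ ⟪x ω, θstar⟫) * ⟪x ω, v⟫ ∂μ := by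
    intro v
    rw [gradient, InnerProductSpace.toDual_symm_apply, hRfder.fderiv,
      ContinuousLinearMap.integral_apply hF'int]
    refine integral_congr_ae (Filter.Eventually.of_forall fun ω => ?_)
    simp only [hF'def]
    simp [smul_eq_mul]
  -- main estimate with v = θ - θstar
  set v : EuclideanSpace ℝ (Fin p) := θ - θstar with hvdef
  have hvinner : ∀ ω, (⟪x ω, v⟫ : ℝ) = ⟪x ω, θ⟫ - ⟪x ω, θstar⟫ := by
    intro ω; rw [hvdef, inner_sub_right]
  have key := key_mvt hΦ hΦ''even hΦ''anti hM0
  -- pointwise a.e. inequality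
  have hpt : ∀ᵐ ω ∂μ, deriv (deriv Φ) M * ⟪x ω, v⟫ ^ 2 ≤
      (deriv Φ ⟪x ω, θ⟫ - deriv Φ ⟪x ω, θstar⟫) * ⟪x ω, v⟫ := by
    filter_upwards [hxbd] with ω hω
    have ha : |(⟪x ω, θ⟫ : ℝ)| ≤ M := by
      calc |(⟪x ω, θ⟫ : ℝ)| ≤ ‖x ω‖ * ‖θ‖ := abs_real_inner_le_norm _ _
        _ ≤ Lx * ‖θstar‖ := mul_le_mul hω (hθD.trans hDlt.le) (norm_nonneg _) hLx0
    have hb : |(⟪x ω, θstar⟫ : ℝ)| ≤ M := by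
      calc |(⟪x ω, θstar⟫ : ℝ)| ≤ ‖x ω‖ * ‖θstar‖ := abs_real_inner_le_norm _ _
        _ ≤ Lx * ‖θstar‖ := mul_le_mul_of_nonneg_right hω (norm_nonneg _)
    have := key ⟪x ω, θ⟫ ⟪x ω, θstar⟫ ha hb
    rw [hvinner ω]
    exact this
  -- integrability of both sides
  have hsqmeas : Measurable (fun ω => (⟪x ω, v⟫ : ℝ) ^ 2) := (hinner v).pow_const 2
  have hsqint : Integrable (fun ω => (⟪x ω, v⟫ : ℝ) ^ 2) μ := by
    apply bddInt _ ((Lx * ‖v‖) ^ 2) hsqmeas.aestronglyMeasurable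
    filter_upwards [hxbd] with ω hω
    have h1 : |(⟪x ω, v⟫ : ℝ)| ≤ Lx * ‖v‖ := by
      calc |(⟪x ω, v⟫ : ℝ)| ≤ ‖x ω‖ * ‖v‖ := abs_real_inner_le_norm _ _
        _ ≤ Lx * ‖v‖ := mul_le_mul_of_nonneg_right hω (norm_nonneg _)
    calc |(⟪x ω, v⟫ : ℝ) ^ 2| = |(⟪x ω, v⟫ : ℝ)| ^ 2 := by
          rw [abs_of_nonneg (sq_nonneg _), sq_abs]
      _ ≤ (Lx * ‖v‖) ^ 2 := pow_le_pow_left₀ (abs_nonneg _) h1 2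
  have hlhsint : Integrable (fun ω => deriv (deriv Φ) M * ⟪x ω, v⟫ ^ 2) μ :=
    hsqint.const_mul _
  have hrhsint : Integrable
      (fun ω => (deriv Φ ⟪x ω, θ⟫ - deriv Φ ⟪x ω, θstar⟫) * ⟪x ω, v⟫) μ := by
    apply bddInt _ (2 * KΦ' * (Lx * ‖v‖))
    · exact (((hΦ'cont.measurable.comp (hinner θ)).sub
        (hΦ'cont.measurable.comp (hinner θstar))).mul (hinner v)).aestronglyMeasurable
    · filter_upwards [hxbd] with ω hω
      rw [abs_mul]
      apply mul_le_mul
      · calc |deriv Φ ⟪x ω, θ⟫ - deriv Φ ⟪x ω, θstar⟫|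
            ≤ |deriv Φ ⟪x ω, θ⟫| + |deriv Φ ⟪x ω, θstar⟫| := abs_sub _ _
          _ ≤ KΦ' + KΦ' := add_le_add (hΦ' _) (hΦ' _)
          _ = 2 * KΦ' := by ring
      · calc |(⟪x ω, v⟫ : ℝ)| ≤ ‖x ω‖ * ‖v‖ := abs_real_inner_le_norm _ _
          _ ≤ Lx * ‖v‖ := mul_le_mul_of_nonneg_right hω (norm_nonneg _)
      · exact abs_nonneg _
      · positivity
  -- integrate the pointwise inequality
  have hint_le : deriv (deriv Φ) M * ∫ ω, (⟪x ω, v⟫ : ℝ) ^ 2 ∂μ ≤ ⟪gradient R θ, v⟫ := by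
    rw [hgrad_inner v, ← integral_const_mul]
    exact integral_mono_ae hlhsint hrhsint hpt
  -- lower bound via lamMin
  have hquad : deriv (deriv Φ) M * (lamMin * ‖v‖ ^ 2) ≤ ⟪gradient R θ, v⟫ := by
    refine le_trans ?_ hint_le
    exact mul_le_mul_of_nonneg_left (hlamMin v) (hΦ''pos M).le
  -- norm bound
  have hvnorm : ‖θstar‖ - D ≤ ‖v‖ := by
    have := norm_sub_norm_le θstar θ
    have h2 : ‖v‖ = ‖θstar - θ‖ := by rw [hvdef, norm_sub_rev]
    linarith
  have hvpos : 0 < ‖v‖ := lt_of_lt_of_le (by linarith [sub_pos.mpr hDlt]) hvnorm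
  have hcs : ⟪gradient R θ, v⟫ ≤ ‖gradient R θ‖ * ‖v‖ := real_inner_le_norm _ _
  have hfinal : deriv (deriv Φ) M * lamMin * ‖v‖ ≤ ‖gradient R θ‖ := by
    have h1 : deriv (deriv Φ) M * lamMin * ‖v‖ * ‖v‖ ≤ ‖gradient R θ‖ * ‖v‖ := by
      have he : deriv (deriv Φ) M * (lamMin * ‖v‖ ^ 2) =
          deriv (deriv Φ) M * lamMin * ‖v‖ * ‖v‖ := by ring
      linarith [hquad, hcs]
    exact le_of_mul_le_mul_right h1 hvpos
  have hc1 : deriv (deriv Φ) M * lamMin / 2 * (‖θstar‖ - D) ≤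
      deriv (deriv Φ) M * lamMin * ‖v‖ := by
    have hcm : 0 < deriv (deriv Φ) M * lamMin := mul_pos (hΦ''pos M) hlamMinPos
    have hsd : 0 < ‖θstar‖ - D := sub_pos.mpr hDlt
    nlinarith [hvnorm, hsd, hcm]
  linarith
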